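/- Let S ∈ O(4) be the swap (x,y) ↦ (y,x) on ℝ² × ℝ². An orthogonal matrix M ∈ O(4) maps T₀ onto T₀ if and only if M is of the form [[P,0],[0,Q]] with P, Q ∈ O(2) (block diagonal), or of the form S·[[P,0],[0,Q]] with P, Q ∈ O(2). In particular, every block-diagonal matrix [[P,0],[0,Q]] with P, Q ∈ O(2) stabilizes T₀. -/

import Mathlib

open Matrix

/-- The standard Clifford torus `T₀ ⊂ S³ ⊂ ℝ⁴ = ℝ² × ℝ²`. -/
def CliffordT0 : Set (Fin 4 → ℝ) :=
  {v | v 0 ^ 2 + v 1 ^ 2 = 1 / 2 ∧ v 2 ^ 2 + v 3 ^ 2 = 1 / 2}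

/-- The block diagonal matrix `[[P,0],[0,Q]]` built from two `2 × 2` matrices. -/
def blockDiag2 (P Q : Matrix (Fin 2) (Fin 2) ℝ) : Matrix (Fin 4) (Fin 4) ℝ :=
  !![P 0 0, P 0 1, 0, 0;
     P 1 0, P 1 1, 0, 0;
     0, 0, Q 0 0, Q 0 1;
     0, 0, Q 1 0, Q 1 1]

/-- The swap `(x, y) ↦ (y, x)` on `ℝ² × ℝ²`. -/
def swapMat : Matrix (Fin 4) (Fin 4) ℝ :=
  !![0, 0, 1, 0;
     0, 0, 0, 1;
     1, 0, 0, 0;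
     0, 1, 0, 0]
lemma bd_fwd (P Q : Matrix (Fin 2) (Fin 2) ℝ) (hP : Pᵀ * P = 1) (hQ : Qᵀ * Q = 1)
    (v : Fin 4 → ℝ) (hv : v ∈ CliffordT0) : (blockDiag2 P Q).mulVec v ∈ CliffordT0 := by
  have p00 := congrFun (congrFun hP 0) 0
  have p01 := congrFun (congrFun hP 0) 1
  have p11 := congrFun (congrFun hP 1) 1
  have q00 := congrFun (congrFun hQ 0) 0
  have q01 := congrFun (congrFun hQ 0) 1
  have q11 := congrFun (congrFun hQ 1) 1
  simp [Matrix.mul_apply, Fin.sum_univ_two, Matrix.one_apply] at p00 p01 p11 q00 q01 q11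
  obtain ⟨h1, h2⟩ := hv
  constructor
  · simp [blockDiag2, Matrix.mulVec, dotProduct, Fin.sum_univ_four,
      Matrix.vecHead, Matrix.vecTail]
    linear_combination (v 0)^2*p00 + (v 1)^2*p11 + 2*(v 0)*(v 1)*p01 + h1
  · simp [blockDiag2, Matrix.mulVec, dotProduct, Fin.sum_univ_four,
      Matrix.vecHead, Matrix.vecTail]
    linear_combination (v 2)^2*q00 + (v 3)^2*q11 + 2*(v 2)*(v 3)*q01 + h2

lemma bd_mul (P Q R S : Matrix (Fin 2) (Fin 2) ℝ) :
    blockDiag2 P Q * blockDiag2 R S = blockDiag2 (P * R) (Q * S) := by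
  ext i j
  fin_cases i <;> fin_cases j <;>
    simp [blockDiag2, Matrix.mul_apply, Fin.sum_univ_four, Fin.sum_univ_two, Matrix.vecHead, Matrix.vecTail]

lemma bd_one : blockDiag2 1 1 = 1 := by
  ext i j
  fin_cases i <;> fin_cases j <;> simp [blockDiag2, Matrix.one_apply, Matrix.vecHead, Matrix.vecTail]

lemma bd_image (P Q : Matrix (Fin 2) (Fin 2) ℝ) (hP : P ∈ Matrix.orthogonalGroup (Fin 2) ℝ)
    (hQ : Q ∈ Matrix.orthogonalGroup (Fin 2) ℝ) :
    (blockDiag2 P Q).mulVec '' CliffordT0 = CliffordT0 := by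
  have hP1 : P * Pᵀ = 1 := by
    have := Matrix.mem_orthogonalGroup_iff _ ℝ |>.mp hP
    exact this
  have hP2 : Pᵀ * P = 1 := by
    have := Matrix.mem_orthogonalGroup_iff' _ ℝ |>.mp hP
    exact this
  have hQ1 : Q * Qᵀ = 1 := by
    have := Matrix.mem_orthogonalGroup_iff _ ℝ |>.mp hQ
    exact this
  have hQ2 : Qᵀ * Q = 1 := by
    have := Matrix.mem_orthogonalGroup_iff' _ ℝ |>.mp hQ
    exact this
  apply Set.Subset.antisymm
  · rintro _ ⟨v, hv, rfl⟩
    exact bd_fwd P Q hP2 hQ2 v hv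
  · intro w hw
    refine ⟨(blockDiag2 Pᵀ Qᵀ).mulVec w, bd_fwd _ _ (by rwa [Matrix.transpose_transpose]) (by rwa [Matrix.transpose_transpose]) w hw, ?_⟩
    rw [Matrix.mulVec_mulVec, bd_mul]
    simp [hP1, hQ1, bd_one]
lemma sq_add_sq_eq_zero' {x y : ℝ} (h : x^2 + y^2 = 0) : x = 0 ∧ y = 0 := by
  constructor <;> nlinarith [sq_nonneg x, sq_nonneg y]

set_option maxHeartbeats 1000000 in
lemma mem_O2_of (P : Matrix (Fin 2) (Fin 2) ℝ) (h : P * Pᵀ = 1) :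
    P ∈ Matrix.orthogonalGroup (Fin 2) ℝ := by
  rw [Matrix.mem_orthogonalGroup_iff]
  exact h

lemma hard (M : Matrix (Fin 4) (Fin 4) ℝ) (hrow : M * Mᵀ = 1) (hcol : Mᵀ * M = 1)
    (h : ∀ v ∈ CliffordT0, M.mulVec v ∈ CliffordT0) :
    (∃ P Q : Matrix (Fin 2) (Fin 2) ℝ, P ∈ Matrix.orthogonalGroup (Fin 2) ℝ ∧
        Q ∈ Matrix.orthogonalGroup (Fin 2) ℝ ∧ M = blockDiag2 P Q) ∨
    (∃ P Q : Matrix (Fin 2) (Fin 2) ℝ, P ∈ Matrix.orthogonalGroup (Fin 2) ℝ ∧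
        Q ∈ Matrix.orthogonalGroup (Fin 2) ℝ ∧ M = swapMat * blockDiag2 P Q) := by
  have key : ∀ v ∈ CliffordT0, (M.mulVec v 0)^2 + (M.mulVec v 1)^2 = 1/2 :=
    fun v hv => (h v hv).1
  have ra : M 0 0^2 + M 0 1^2 + M 0 2^2 + M 0 3^2 = 1 := by
    have := congrFun (congrFun hrow 0) 0
    simp [Matrix.mul_apply, Fin.sum_univ_four, Matrix.one_apply, Matrix.transpose_apply] at this
    linear_combination this
  have rb : M 1 0^2 + M 1 1^2 + M 1 2^2 + M 1 3^2 = 1 := by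
    have := congrFun (congrFun hrow 1) 1
    simp [Matrix.mul_apply, Fin.sum_univ_four, Matrix.one_apply, Matrix.transpose_apply] at this
    linear_combination this
  have rab : M 0 0 * M 1 0 + M 0 1 * M 1 1 + M 0 2 * M 1 2 + M 0 3 * M 1 3 = 0 := by
    have := congrFun (congrFun hrow 0) 1
    simp [Matrix.mul_apply, Fin.sum_univ_four, Matrix.one_apply, Matrix.transpose_apply] at this
    linear_combination this
  have rc : M 2 0^2 + M 2 1^2 + M 2 2^2 + M 2 3^2 = 1 := by
    have := congrFun (congrFun hrow 2) 2
    simp [Matrix.mul_apply, Fin.sum_univ_four, Matrix.one_apply, Matrix.transpose_apply] at this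
    linear_combination this
  have rd : M 3 0^2 + M 3 1^2 + M 3 2^2 + M 3 3^2 = 1 := by
    have := congrFun (congrFun hrow 3) 3
    simp [Matrix.mul_apply, Fin.sum_univ_four, Matrix.one_apply, Matrix.transpose_apply] at this
    linear_combination this
  have rcd : M 2 0 * M 3 0 + M 2 1 * M 3 1 + M 2 2 * M 3 2 + M 2 3 * M 3 3 = 0 := by
    have := congrFun (congrFun hrow 2) 3
    simp [Matrix.mul_apply, Fin.sum_univ_four, Matrix.one_apply, Matrix.transpose_apply] at this
    linear_combination this
  have c0 : M 0 0^2 + M 1 0^2 + M 2 0^2 + M 3 0^2 = 1 := by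
    have := congrFun (congrFun hcol 0) 0
    simp [Matrix.mul_apply, Fin.sum_univ_four, Matrix.one_apply, Matrix.transpose_apply] at this
    linear_combination this
  have c1 : M 0 1^2 + M 1 1^2 + M 2 1^2 + M 3 1^2 = 1 := by
    have := congrFun (congrFun hcol 1) 1
    simp [Matrix.mul_apply, Fin.sum_univ_four, Matrix.one_apply, Matrix.transpose_apply] at this
    linear_combination this
  have c2 : M 0 2^2 + M 1 2^2 + M 2 2^2 + M 3 2^2 = 1 := by
    have := congrFun (congrFun hcol 2) 2
    simp [Matrix.mul_apply, Fin.sum_univ_four, Matrix.one_apply, Matrix.transpose_apply] at this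
    linear_combination this
  have c3 : M 0 3^2 + M 1 3^2 + M 2 3^2 + M 3 3^2 = 1 := by
    have := congrFun (congrFun hcol 3) 3
    simp [Matrix.mul_apply, Fin.sum_univ_four, Matrix.one_apply, Matrix.transpose_apply] at this
    linear_combination this
  have e1 : (M 0 0 * (1/2)+M 0 1 * (1/2)+M 0 2 * (1/2)+M 0 3 * (1/2))^2 + (M 1 0 * (1/2)+M 1 1 * (1/2)+M 1 2 * (1/2)+M 1 3 * (1/2))^2 = 1/2 := by
    have hm := key ![(1/2), (1/2), (1/2), (1/2)] (by norm_num [CliffordT0, Matrix.cons_val_two, Matrix.cons_val_three])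
    simp [Matrix.mulVec, dotProduct, Fin.sum_univ_four] at hm
    linear_combination hm
  have e2 : (M 0 0 * (1/2)+M 0 1 * (1/2)+M 0 2 * (-1/2)+M 0 3 * (-1/2))^2 + (M 1 0 * (1/2)+M 1 1 * (1/2)+M 1 2 * (-1/2)+M 1 3 * (-1/2))^2 = 1/2 := by
    have hm := key ![(1/2), (1/2), (-1/2), (-1/2)] (by norm_num [CliffordT0, Matrix.cons_val_two, Matrix.cons_val_three])
    simp [Matrix.mulVec, dotProduct, Fin.sum_univ_four] at hm
    linear_combination hm
  have e3 : (M 0 0 * (1/2)+M 0 1 * (1/2)+M 0 2 * (1/2)+M 0 3 * (-1/2))^2 + (M 1 0 * (1/2)+M 1 1 * (1/2)+M 1 2 * (1/2)+M 1 3 * (-1/2))^2 = 1/2 := by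
    have hm := key ![(1/2), (1/2), (1/2), (-1/2)] (by norm_num [CliffordT0, Matrix.cons_val_two, Matrix.cons_val_three])
    simp [Matrix.mulVec, dotProduct, Fin.sum_univ_four] at hm
    linear_combination hm
  have e4 : (M 0 0 * (1/2)+M 0 1 * (1/2)+M 0 2 * (-1/2)+M 0 3 * (1/2))^2 + (M 1 0 * (1/2)+M 1 1 * (1/2)+M 1 2 * (-1/2)+M 1 3 * (1/2))^2 = 1/2 := by
    have hm := key ![(1/2), (1/2), (-1/2), (1/2)] (by norm_num [CliffordT0, Matrix.cons_val_two, Matrix.cons_val_three])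
    simp [Matrix.mulVec, dotProduct, Fin.sum_univ_four] at hm
    linear_combination hm
  have e5 : (M 0 0 * (1/2)+M 0 1 * (-1/2)+M 0 2 * (1/2)+M 0 3 * (1/2))^2 + (M 1 0 * (1/2)+M 1 1 * (-1/2)+M 1 2 * (1/2)+M 1 3 * (1/2))^2 = 1/2 := by
    have hm := key ![(1/2), (-1/2), (1/2), (1/2)] (by norm_num [CliffordT0, Matrix.cons_val_two, Matrix.cons_val_three])
    simp [Matrix.mulVec, dotProduct, Fin.sum_univ_four] at hm
    linear_combination hm
  have e6 : (M 0 0 * (1/2)+M 0 1 * (-1/2)+M 0 2 * (-1/2)+M 0 3 * (-1/2))^2 + (M 1 0 * (1/2)+M 1 1 * (-1/2)+M 1 2 * (-1/2)+M 1 3 * (-1/2))^2 = 1/2 := by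
    have hm := key ![(1/2), (-1/2), (-1/2), (-1/2)] (by norm_num [CliffordT0, Matrix.cons_val_two, Matrix.cons_val_three])
    simp [Matrix.mulVec, dotProduct, Fin.sum_univ_four] at hm
    linear_combination hm
  have e7 : (M 0 0 * (1/2)+M 0 1 * (-1/2)+M 0 2 * (1/2)+M 0 3 * (-1/2))^2 + (M 1 0 * (1/2)+M 1 1 * (-1/2)+M 1 2 * (1/2)+M 1 3 * (-1/2))^2 = 1/2 := by
    have hm := key ![(1/2), (-1/2), (1/2), (-1/2)] (by norm_num [CliffordT0, Matrix.cons_val_two, Matrix.cons_val_three])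
    simp [Matrix.mulVec, dotProduct, Fin.sum_univ_four] at hm
    linear_combination hm
  have e9 : (M 0 0 * (7/10)+M 0 1 * (1/10)+M 0 2 * (1/2)+M 0 3 * (1/2))^2 + (M 1 0 * (7/10)+M 1 1 * (1/10)+M 1 2 * (1/2)+M 1 3 * (1/2))^2 = 1/2 := by
    have hm := key ![(7/10), (1/10), (1/2), (1/2)] (by norm_num [CliffordT0, Matrix.cons_val_two, Matrix.cons_val_three])
    simp [Matrix.mulVec, dotProduct, Fin.sum_univ_four] at hm
    linear_combination hm
  have e13 : (M 0 0 * (1/2)+M 0 1 * (1/2)+M 0 2 * (7/10)+M 0 3 * (1/10))^2 + (M 1 0 * (1/2)+M 1 1 * (1/2)+M 1 2 * (7/10)+M 1 3 * (1/10))^2 = 1/2 := by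
    have hm := key ![(1/2), (1/2), (7/10), (1/10)] (by norm_num [CliffordT0, Matrix.cons_val_two, Matrix.cons_val_three])
    simp [Matrix.mulVec, dotProduct, Fin.sum_univ_four] at hm
    linear_combination hm
  have h01 : M 0 0 * M 0 1 + M 1 0 * M 1 1 = 0 := by linear_combination ((1/2) : ℝ) * e1 + ((1/2) : ℝ) * e2 + ((-1/2) : ℝ) * e5 + ((-1/2) : ℝ) * e6
  have h23 : M 0 2 * M 0 3 + M 1 2 * M 1 3 = 0 := by linear_combination ((1/2) : ℝ) * e1 + ((1/2) : ℝ) * e2 + ((-1/2) : ℝ) * e3 + ((-1/2) : ℝ) * e4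
  have h02 : M 0 0 * M 0 2 + M 1 0 * M 1 2 = 0 := by linear_combination ((1/2) : ℝ) * e1 + ((-1/2) : ℝ) * e4 + ((-1/2) : ℝ) * e6 + ((1/2) : ℝ) * e7
  have h03 : M 0 0 * M 0 3 + M 1 0 * M 1 3 = 0 := by linear_combination ((-1/2) : ℝ) * e2 + ((1/2) : ℝ) * e4 + ((1/2) : ℝ) * e5 + ((-1/2) : ℝ) * e7
  have h12 : M 0 1 * M 0 2 + M 1 1 * M 1 2 = 0 := by linear_combination ((-1/2) : ℝ) * e2 + ((1/2) : ℝ) * e3 + ((1/2) : ℝ) * e6 + ((-1/2) : ℝ) * e7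
  have h13 : M 0 1 * M 0 3 + M 1 1 * M 1 3 = 0 := by linear_combination ((1/2) : ℝ) * e1 + ((-1/2) : ℝ) * e3 + ((-1/2) : ℝ) * e5 + ((1/2) : ℝ) * e7
  have hEq : M 0 0^2 + M 1 0^2 = M 0 1^2 + M 1 1^2 := by linear_combination ((-3) : ℝ) * e1 + ((1/3) : ℝ) * e2 + ((-2) : ℝ) * e5 + ((1/2) : ℝ) * e6 + ((25/6) : ℝ) * e9
  have hEq2 : M 0 2^2 + M 1 2^2 = M 0 3^2 + M 1 3^2 := by linear_combination ((-3) : ℝ) * e1 + ((1/3) : ℝ) * e2 + ((-2) : ℝ) * e3 + ((1/2) : ℝ) * e4 + ((25/6) : ℝ) * e13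
  have hSum : (M 0 0^2 + M 1 0^2) + (M 0 2^2 + M 1 2^2) = 1 := by linear_combination ((-3) : ℝ) * e1 + ((1/3) : ℝ) * e2 + ((-1/2) : ℝ) * e3 + ((3/4) : ℝ) * e4 + ((-1/2) : ℝ) * e5 + ((3/4) : ℝ) * e6 + ((25/12) : ℝ) * e9 + ((25/12) : ℝ) * e13
  have ht : (M 0 0^2 + M 1 0^2) * ((M 0 0^2 + M 1 0^2) - 1) = 0 := by
    linear_combination (M 0 0)^2 * ra + (M 1 0)^2 * rb + 2*(M 0 0)*(M 1 0)*rab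
      - (M 0 0 * M 0 1 + M 1 0 * M 1 1) * h01
      - (M 0 0 * M 0 2 + M 1 0 * M 1 2) * h02
      - (M 0 0 * M 0 3 + M 1 0 * M 1 3) * h03
  clear e1 e2 e3 e4 e5 e6 e7 e9 e13 h key
  rcases mul_eq_zero.mp ht with ht0 | ht1
  · -- t = 0 : swap case
    have hg00 : M 0 0^2 + M 1 0^2 = 0 := ht0
    obtain ⟨z00, z10⟩ := sq_add_sq_eq_zero' hg00
    have hg11 : M 0 1^2 + M 1 1^2 = 0 := by linear_combination hg00 - hEq
    obtain ⟨z01, z11⟩ := sq_add_sq_eq_zero' hg11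
    have hg22 : M 0 2^2 + M 1 2^2 = 1 := by linear_combination hSum - hg00
    have hg33 : M 0 3^2 + M 1 3^2 = 1 := by linear_combination hg22 - hEq2
    have hz2 : M 2 2^2 + M 3 2^2 = 0 := by linear_combination c2 - hg22
    obtain ⟨z22, z32⟩ := sq_add_sq_eq_zero' hz2
    have hz3 : M 2 3^2 + M 3 3^2 = 0 := by linear_combination c3 - hg33
    obtain ⟨z23, z33⟩ := sq_add_sq_eq_zero' hz3
    refine Or.inr ⟨!![M 2 0, M 2 1; M 3 0, M 3 1], !![M 0 2, M 0 3; M 1 2, M 1 3], ?_, ?_, ?_⟩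
    · apply mem_O2_of
      ext i j
      fin_cases i <;> fin_cases j <;>
        simp [Matrix.mul_apply, Fin.sum_univ_two, Matrix.one_apply,
          Matrix.vecHead, Matrix.vecTail, Matrix.transpose_apply]
      · linear_combination rc - M 2 2 * z22 - M 2 3 * z23
      · linear_combination rcd - M 3 2 * z22 - M 3 3 * z23
      · linear_combination rcd - M 3 2 * z22 - M 3 3 * z23
      · linear_combination rd - M 3 2 * z32 - M 3 3 * z33
    · apply mem_O2_of
      ext i j
      fin_cases i <;> fin_cases j <;>
        simp [Matrix.mul_apply, Fin.sum_univ_two, Matrix.one_apply,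
          Matrix.vecHead, Matrix.vecTail, Matrix.transpose_apply]
      · linear_combination ra - M 0 0 * z00 - M 0 1 * z01
      · linear_combination rab - M 0 0 * z10 - M 0 1 * z11
      · linear_combination rab - M 1 0 * z00 - M 1 1 * z01
      · linear_combination rb - M 1 0 * z10 - M 1 1 * z11
    · ext i j
      fin_cases i <;> fin_cases j <;>
        simp [swapMat, blockDiag2, Matrix.mul_apply, Fin.sum_univ_four,
          Matrix.vecHead, Matrix.vecTail, z00, z10, z01, z11, z22, z32, z23, z33]
  · -- t = 1 : block diagonal case
    have hg00 : M 0 0^2 + M 1 0^2 = 1 := by linarith [sub_eq_zero.mp ht1]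
    have hg11 : M 0 1^2 + M 1 1^2 = 1 := by linear_combination hg00 - hEq
    have hg22 : M 0 2^2 + M 1 2^2 = 0 := by linear_combination hSum - hg00
    obtain ⟨z02, z12⟩ := sq_add_sq_eq_zero' hg22
    have hg33 : M 0 3^2 + M 1 3^2 = 0 := by linear_combination hg22 - hEq2
    obtain ⟨z03, z13⟩ := sq_add_sq_eq_zero' hg33
    have hz0 : M 2 0^2 + M 3 0^2 = 0 := by linear_combination c0 - hg00
    obtain ⟨z20, z30⟩ := sq_add_sq_eq_zero' hz0
    have hz1 : M 2 1^2 + M 3 1^2 = 0 := by linear_combination c1 - hg11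
    obtain ⟨z21, z31⟩ := sq_add_sq_eq_zero' hz1
    refine Or.inl ⟨!![M 0 0, M 0 1; M 1 0, M 1 1], !![M 2 2, M 2 3; M 3 2, M 3 3], ?_, ?_, ?_⟩
    · apply mem_O2_of
      ext i j
      fin_cases i <;> fin_cases j <;>
        simp [Matrix.mul_apply, Fin.sum_univ_two, Matrix.one_apply,
          Matrix.vecHead, Matrix.vecTail, Matrix.transpose_apply]
      · linear_combination ra - M 0 2 * z02 - M 0 3 * z03
      · linear_combination rab - M 0 2 * z12 - M 0 3 * z13
      · linear_combination rab - M 1 2 * z02 - M 1 3 * z03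
      · linear_combination rb - M 1 2 * z12 - M 1 3 * z13
    · apply mem_O2_of
      ext i j
      fin_cases i <;> fin_cases j <;>
        simp [Matrix.mul_apply, Fin.sum_univ_two, Matrix.one_apply,
          Matrix.vecHead, Matrix.vecTail, Matrix.transpose_apply]
      · linear_combination rc - M 2 0 * z20 - M 2 1 * z21
      · linear_combination rcd - M 2 0 * z30 - M 2 1 * z31
      · linear_combination rcd - M 3 0 * z20 - M 3 1 * z21
      · linear_combination rd - M 3 0 * z30 - M 3 1 * z31
    · ext i j
      fin_cases i <;> fin_cases j <;>
        simp [blockDiag2, Matrix.vecHead, Matrix.vecTail,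
          z02, z12, z03, z13, z20, z30, z21, z31]

theorem stabiliser_of_clifford_torus :
    (∀ M : Matrix (Fin 4) (Fin 4) ℝ, M ∈ Matrix.orthogonalGroup (Fin 4) ℝ →
      ((M.mulVec '' CliffordT0 = CliffordT0) ↔
        (∃ P Q : Matrix (Fin 2) (Fin 2) ℝ, P ∈ Matrix.orthogonalGroup (Fin 2) ℝ ∧
            Q ∈ Matrix.orthogonalGroup (Fin 2) ℝ ∧ M = blockDiag2 P Q) ∨
        (∃ P Q : Matrix (Fin 2) (Fin 2) ℝ, P ∈ Matrix.orthogonalGroup (Fin 2) ℝ ∧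
            Q ∈ Matrix.orthogonalGroup (Fin 2) ℝ ∧ M = swapMat * blockDiag2 P Q))) ∧
    (∀ P Q : Matrix (Fin 2) (Fin 2) ℝ, P ∈ Matrix.orthogonalGroup (Fin 2) ℝ →
      Q ∈ Matrix.orthogonalGroup (Fin 2) ℝ →
      (blockDiag2 P Q).mulVec '' CliffordT0 = CliffordT0) := by
  have swap_fwd : ∀ v ∈ CliffordT0, swapMat.mulVec v ∈ CliffordT0 := by
    intro v hv
    obtain ⟨h1, h2⟩ := hv
    constructor <;>
      simp [swapMat, Matrix.mulVec, dotProduct, Fin.sum_univ_four,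
        Matrix.vecHead, Matrix.vecTail] <;> linarith
  have swap_img : swapMat.mulVec '' CliffordT0 = CliffordT0 := by
    apply Set.Subset.antisymm
    · rintro _ ⟨v, hv, rfl⟩; exact swap_fwd v hv
    · intro w hw
      refine ⟨swapMat.mulVec w, swap_fwd w hw, ?_⟩
      rw [Matrix.mulVec_mulVec]
      have : swapMat * swapMat = 1 := by
        ext i j
        fin_cases i <;> fin_cases j <;>
          simp [swapMat, Matrix.mul_apply, Fin.sum_univ_four, Matrix.one_apply,
            Matrix.vecHead, Matrix.vecTail]
      rw [this, Matrix.one_mulVec]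
  constructor
  · intro M hM
    have hrow : M * Mᵀ = 1 := by
      have := Matrix.mem_orthogonalGroup_iff _ ℝ |>.mp hM
      exact this
    have hcol : Mᵀ * M = 1 := by
      have := Matrix.mem_orthogonalGroup_iff' _ ℝ |>.mp hM
      exact this
    constructor
    · intro himg
      apply hard M hrow hcol
      intro v hv
      rw [← himg]
      exact Set.mem_image_of_mem _ hv
    · rintro (⟨P, Q, hP, hQ, rfl⟩ | ⟨P, Q, hP, hQ, rfl⟩)
      · exact bd_image P Q hP hQ
      · have himg2 : (swapMat * blockDiag2 P Q).mulVec '' CliffordT0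
            = swapMat.mulVec '' ((blockDiag2 P Q).mulVec '' CliffordT0) := by
          rw [Set.image_image]
          apply Set.image_congr'
          intro v
          rw [Matrix.mulVec_mulVec]
        rw [himg2, bd_image P Q hP hQ, swap_img]
  · exact fun P Q hP hQ => bd_image P Q hP hQ
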